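/- Let a, b, c, d ∈ ℝ² and θ ∈ ℝ, and set w = (cos θ, sin θ) and w⊥ = (−sin θ, cos θ). Suppose ⟨a − c, w⟩ ≥ 0 and ⟨b − d, w⊥⟩ ≥ 0, and consider the rectangle R(θ) = {z ∈ ℝ² : ⟨c, w⟩ ≤ ⟨z, w⟩ ≤ ⟨a, w⟩ and ⟨d, w⊥⟩ ≤ ⟨z, w⊥⟩ ≤ ⟨b, w⊥⟩}, which is isothetic with respect to the rotated axes. Then the Lebesgue area of R(θ) equals ⟨a − c, w⟩·⟨b − d, w⊥⟩; moreover, writing a − c = (x₁, y₁) and b − d = (x₂, y₂), one has ⟨a − c, w⟩·⟨b − d, w⊥⟩ = (x₁y₂ − y₁x₂)/2 + ((x₁y₂ + y₁x₂)/2)·cos 2θ + ((y₁y₂ − x₁x₂)/2)·sin 2θ for all θ, so the area of the overlapping region is of the form c₀ + c₁·cos 2θ + c₂·sin 2θ for constants c₀, c₁, c₂ depending only on the four supporting points. -/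

import Mathlib

open scoped RealInnerProductSpace

noncomputable section

/-- The Euclidean plane. -/
abbrev Plane := EuclideanSpace ℝ (Fin 2)

/-- The unit vector `w_θ = (cos θ, sin θ)`. -/
def wdir (θ : ℝ) : Plane := WithLp.toLp 2 ![Real.cos θ, Real.sin θ]

/-- The unit vector `w_θ⊥ = (−sin θ, cos θ)`. -/
def wperp (θ : ℝ) : Plane := WithLp.toLp 2 ![-Real.sin θ, Real.cos θ]

/-- The rotation linear map sending `z` to its rotated coordinates. -/
def rotMap (θ : ℝ) : Plane →ₗ[ℝ] Plane :=
  Matrix.toEuclideanLin !![Real.cos θ, Real.sin θ; -Real.sin θ, Real.cos θ]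

lemma rotMap_det (θ : ℝ) : LinearMap.det (rotMap θ) = 1 := by
  rw [rotMap, Matrix.toEuclideanLin_eq_toLin, LinearMap.det_toLin, Matrix.det_fin_two_of]
  nlinarith [Real.sin_sq_add_cos_sq θ]

lemma rotMap_apply_zero (θ : ℝ) (z : Plane) : rotMap θ z 0 = ⟪z, wdir θ⟫ := by
  simp [rotMap, wdir, PiLp.inner_apply, Fin.sum_univ_two, Matrix.toEuclideanLin_apply,
    Matrix.mulVec, dotProduct, Fin.sum_univ_two]

lemma rotMap_apply_one (θ : ℝ) (z : Plane) : rotMap θ z 1 = ⟪z, wperp θ⟫ := by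
  simp [rotMap, wperp, PiLp.inner_apply, Fin.sum_univ_two, Matrix.toEuclideanLin_apply,
    Matrix.mulVec, dotProduct, Fin.sum_univ_two]

lemma volume_box (p q r t : ℝ) :
    MeasureTheory.volume {x : Plane | (p ≤ x 0 ∧ x 0 ≤ q) ∧ (r ≤ x 1 ∧ x 1 ≤ t)} =
      ENNReal.ofReal (q - p) * ENNReal.ofReal (t - r) := by
  have h := (EuclideanSpace.volume_preserving_symm_measurableEquiv_toLp (Fin 2)).measure_preimage
    (s := Set.univ.pi fun i => Set.Icc (![p, r] i) (![q, t] i))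
    (by apply (MeasurableSet.univ_pi (fun i => measurableSet_Icc)).nullMeasurableSet)
  rw [show {x : Plane | (p ≤ x 0 ∧ x 0 ≤ q) ∧ (r ≤ x 1 ∧ x 1 ≤ t)} =
      (MeasurableEquiv.toLp 2 (Fin 2 → ℝ)).symm ⁻¹'
        (Set.univ.pi fun i => Set.Icc (![p, r] i) (![q, t] i)) from ?_, h,
    MeasureTheory.volume_pi_pi, Fin.prod_univ_two]
  · simp [Real.volume_Icc]
  · ext x
    simp only [MeasurableEquiv.toLp_symm_apply, MeasurableEquiv.coe_mk, Equiv.coe_fn_mk,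
      Set.mem_preimage, Set.mem_pi, Set.mem_univ, forall_true_left, Set.mem_Icc,
      Fin.forall_fin_two, Matrix.cons_val_zero, Matrix.cons_val_one,
      Matrix.head_cons, Set.mem_setOf_eq]

/-- The area of the overlapping region of two opposite extremal θ-quadrants: the
rectangle, isothetic with respect to the rotated axes and determined by the supporting
points `a, b, c, d`, has area `⟪a−c, w_θ⟫·⟪b−d, w_θ⊥⟫`, and this product has the
sinusoidal form `c₀ + c₁·cos 2θ + c₂·sin 2θ`. -/
theorem overlap_rectangle_area_form (a b c d : Plane) (θ : ℝ)
    (h₁ : 0 ≤ ⟪a - c, wdir θ⟫) (h₂ : 0 ≤ ⟪b - d, wperp θ⟫) :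
    MeasureTheory.volume
        {z : Plane | (⟪c, wdir θ⟫ ≤ ⟪z, wdir θ⟫ ∧ ⟪z, wdir θ⟫ ≤ ⟪a, wdir θ⟫) ∧
          (⟪d, wperp θ⟫ ≤ ⟪z, wperp θ⟫ ∧ ⟪z, wperp θ⟫ ≤ ⟪b, wperp θ⟫)} =
      ENNReal.ofReal (⟪a - c, wdir θ⟫ * ⟪b - d, wperp θ⟫) ∧
    ⟪a - c, wdir θ⟫ * ⟪b - d, wperp θ⟫ =
      ((a - c) 0 * (b - d) 1 - (a - c) 1 * (b - d) 0) / 2 +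
        (((a - c) 0 * (b - d) 1 + (a - c) 1 * (b - d) 0) / 2) * Real.cos (2 * θ) +
        (((a - c) 1 * (b - d) 1 - (a - c) 0 * (b - d) 0) / 2) * Real.sin (2 * θ) := by
  constructor
  · have hdet : LinearMap.det (rotMap θ) ≠ 0 := by rw [rotMap_det]; norm_num
    have hset : {z : Plane | (⟪c, wdir θ⟫ ≤ ⟪z, wdir θ⟫ ∧ ⟪z, wdir θ⟫ ≤ ⟪a, wdir θ⟫) ∧
          (⟪d, wperp θ⟫ ≤ ⟪z, wperp θ⟫ ∧ ⟪z, wperp θ⟫ ≤ ⟪b, wperp θ⟫)} =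
        (rotMap θ) ⁻¹' {x : Plane | (⟪c, wdir θ⟫ ≤ x 0 ∧ x 0 ≤ ⟪a, wdir θ⟫) ∧
          (⟪d, wperp θ⟫ ≤ x 1 ∧ x 1 ≤ ⟪b, wperp θ⟫)} := by
      ext z
      simp only [Set.mem_setOf_eq, Set.mem_preimage, rotMap_apply_zero, rotMap_apply_one]
    rw [hset, MeasureTheory.Measure.addHaar_preimage_linearMap _ hdet, volume_box,
      rotMap_det, ← inner_sub_left, ← inner_sub_left,
      ← ENNReal.ofReal_mul h₁]
    norm_num
  · have e1 : ⟪a - c, wdir θ⟫ = (a - c) 0 * Real.cos θ + (a - c) 1 * Real.sin θ := by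
      simp [wdir, PiLp.inner_apply, Fin.sum_univ_two]
      ring
    have e2 : ⟪b - d, wperp θ⟫ = -((b - d) 0 * Real.sin θ) + (b - d) 1 * Real.cos θ := by
      simp [wperp, PiLp.inner_apply, Fin.sum_univ_two]
      ring
    rw [e1, e2, Real.cos_two_mul, Real.sin_two_mul]
    linear_combination (-(a - c) 1 * (b - d) 0) * Real.sin_sq_add_cos_sq θ
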